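/- arXiv:2007.06697 — 2 statements merged into one kernel-verified Lean document; each statement's English description precedes it below -/
import Mathlib

section
/- For every natural number I ≥ 3 and all real numbers x, y with 1/I ≤ x ≤ 1, 1/I ≤ y ≤ 1, and min(x,y) ≤ 1/2, one has ((I−2)/I)·(x·(1−y) + (1−x)·y) − (2·(I−2)/(I·(I−1)))·(1−x)·(1−y) ≥ (1/4)·min(x − 1/I, y − 1/I). -/
lemma balanced_key (n x y : ℝ) (hn : 3 ≤ n)
    (hx1 : 1 / n ≤ x) (hx2 : x ≤ 1) (hy1 : 1 / n ≤ y) (hy2 : y ≤ 1)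
    (hxy : x ≤ y) (hx12 : x ≤ 1/2) :
    (n - 2) / n * (x * (1 - y) + (1 - x) * y)
      - 2 * (n - 2) / (n * (n - 1)) * (1 - x) * (1 - y)
      ≥ (1/4) * (x - 1 / n) := by
  have hn0 : (0:ℝ) < n := by linarith
  have hn1 : (0:ℝ) < n - 1 := by linarith
  have hnx : 1 ≤ n * x := by
    have := (div_le_iff₀ hn0).mp hx1
    linarith
  have hny : 1 ≤ n * y := by
    have := (div_le_iff₀ hn0).mp hy1
    linarith
  rw [ge_iff_le, ← sub_nonneg]
  have heq : (n - 2) / n * (x * (1 - y) + (1 - x) * y)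
      - 2 * (n - 2) / (n * (n - 1)) * (1 - x) * (1 - y)
      - (1/4) * (x - 1 / n)
      = ((n - 2) * (n - 1) * (x * (1 - y) + (1 - x) * y)
        - 2 * (n - 2) * (1 - x) * (1 - y)
        - (1/4) * (n - 1) * (n * x - 1)) / (n * (n - 1)) := by
    field_simp
  rw [heq]
  apply div_nonneg _ (by positivity)
  nlinarith [mul_nonneg (sub_nonneg.mpr hnx) (sub_nonneg.mpr hy2),
    mul_nonneg (sub_nonneg.mpr hnx) (sub_nonneg.mpr hxy),
    mul_nonneg (sub_nonneg.mpr hny) (sub_nonneg.mpr hx2),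
    mul_nonneg (sub_nonneg.mpr hny) (sub_nonneg.mpr hy2),
    mul_nonneg (mul_nonneg (sub_nonneg.mpr hnx) (sub_nonneg.mpr hy2)) (sub_nonneg.mpr hn),
    mul_nonneg (mul_nonneg (sub_nonneg.mpr hnx) (sub_nonneg.mpr hxy)) (sub_nonneg.mpr hn),
    mul_nonneg (sub_nonneg.mpr hx12) (sub_nonneg.mpr hny),
    mul_nonneg (mul_nonneg (sub_nonneg.mpr hx12) (sub_nonneg.mpr hny)) (sub_nonneg.mpr hn),
    mul_nonneg (sub_nonneg.mpr hnx) (sub_nonneg.mpr hn),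
    sq_nonneg (x - y), sq_nonneg (1 - x), sq_nonneg (1 - y)]

/-- Part (d) of the lemma bounding differences of ancestral-configuration
probabilities in the balanced quartet case: for `I ≥ 3`, `x, y ∈ [1/I, 1]`
with `min x y ≤ 1/2`, the combination of `F` event probabilities is at least
`(1/4)·min (x − 1/I) (y − 1/I)`. -/
theorem balanced_F_difference (I : ℕ) (hI : 3 ≤ I) (x y : ℝ)
    (hx1 : 1 / (I : ℝ) ≤ x) (hx2 : x ≤ 1)
    (hy1 : 1 / (I : ℝ) ≤ y) (hy2 : y ≤ 1)
    (hmin : min x y ≤ 1/2) :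
    ((I : ℝ) - 2) / I * (x * (1 - y) + (1 - x) * y)
      - 2 * ((I : ℝ) - 2) / ((I : ℝ) * ((I : ℝ) - 1)) * (1 - x) * (1 - y)
      ≥ (1/4) * min (x - 1 / (I : ℝ)) (y - 1 / (I : ℝ)) := by
  have hn : (3:ℝ) ≤ (I:ℝ) := by exact_mod_cast hI
  rcases le_total x y with h | h
  · have hminx : min x y = x := min_eq_left h
    rw [hminx] at hmin
    rw [min_eq_left (by linarith : x - 1 / (I:ℝ) ≤ y - 1 / (I:ℝ))]
    exact balanced_key (I:ℝ) x y hn hx1 hx2 hy1 hy2 h hmin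
  · have hminy : min x y = y := min_eq_right h
    rw [hminy] at hmin
    rw [min_eq_right (by linarith : y - 1 / (I:ℝ) ≤ x - 1 / (I:ℝ))]
    have := balanced_key (I:ℝ) y x hn hy1 hy2 hx1 hx2 h hmin
    linarith [this]
end

section
/- For every natural number I ≥ 2 and all real numbers x, y with 1/I ≤ x ≤ 1 and 1/I ≤ y ≤ 1, one has ((I−2)/I)·(x·(1−y) + (1−x)·y) − (2·(I−2)/(I·(I−1)))·(1−x)·(1−y) ≥ ((I−2)/(I·(I−1)))·(1 − min(x,y))·(I·max(x,y) − 1). -/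
/-- Intermediate inequality in the proof of the lemma comparing
ancestral-configuration probabilities in the balanced quartet case: for
`I ≥ 2` and `x, y ∈ [1/I, 1]`. -/
theorem balanced_F_intermediate (I : ℕ) (hI : 2 ≤ I) (x y : ℝ)
    (hx1 : 1 / (I : ℝ) ≤ x) (hx2 : x ≤ 1)
    (hy1 : 1 / (I : ℝ) ≤ y) (hy2 : y ≤ 1) :
    ((I : ℝ) - 2) / I * (x * (1 - y) + (1 - x) * y)
      - 2 * ((I : ℝ) - 2) / ((I : ℝ) * ((I : ℝ) - 1)) * (1 - x) * (1 - y)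
      ≥ ((I : ℝ) - 2) / ((I : ℝ) * ((I : ℝ) - 1))
          * (1 - min x y) * ((I : ℝ) * max x y - 1) := by
  have hn : (2:ℝ) ≤ (I:ℝ) := by exact_mod_cast hI
  have hn0 : (0:ℝ) < (I:ℝ) := by linarith
  have hn1 : (0:ℝ) < (I:ℝ) - 1 := by linarith
  have hnx : 1 ≤ (I:ℝ) * x := by
    rw [div_le_iff₀ hn0] at hx1; linarith
  have hny : 1 ≤ (I:ℝ) * y := by
    rw [div_le_iff₀ hn0] at hy1; linarith
  rcases le_total x y with h | h
  · rw [min_eq_left h, max_eq_right h, ge_iff_le, ← sub_nonneg]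
    have key : ((I : ℝ) - 2) / I * (x * (1 - y) + (1 - x) * y)
      - 2 * ((I : ℝ) - 2) / ((I : ℝ) * ((I : ℝ) - 1)) * (1 - x) * (1 - y)
      - ((I : ℝ) - 2) / ((I : ℝ) * ((I : ℝ) - 1)) * (1 - x) * ((I : ℝ) * y - 1)
      = (((I:ℝ) - 2) * ((1 - y) * ((I:ℝ) * x - 1))) / ((I:ℝ) * ((I:ℝ) - 1)) := by
      field_simp
      ring
    rw [key]
    apply div_nonneg
    · apply mul_nonneg (by linarith)
      apply mul_nonneg (by linarith) (by linarith)
    · positivity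
  · rw [min_eq_right h, max_eq_left h, ge_iff_le, ← sub_nonneg]
    have key : ((I : ℝ) - 2) / I * (x * (1 - y) + (1 - x) * y)
      - 2 * ((I : ℝ) - 2) / ((I : ℝ) * ((I : ℝ) - 1)) * (1 - x) * (1 - y)
      - ((I : ℝ) - 2) / ((I : ℝ) * ((I : ℝ) - 1)) * (1 - y) * ((I : ℝ) * x - 1)
      = (((I:ℝ) - 2) * ((1 - x) * ((I:ℝ) * y - 1))) / ((I:ℝ) * ((I:ℝ) - 1)) := by
      field_simp
      ring
    rw [key]
    apply div_nonneg
    · apply mul_nonneg (by linarith)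
      apply mul_nonneg (by linarith) (by linarith)
    · positivity
end
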